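/- arXiv:2404.08422 — 2 statements merged into one kernel-verified Lean document; each statement's English description precedes it below -/
import Mathlib

section
/- Let A be a commutative von Neumann regular ring and P ∈ Spec(A). Then the socle of A (as an A-module) is contained in P if and only if P is not an isolated point of Spec(A). Consequently Spec(A/sA) is homeomorphic to the Cantor–Bendixson derivative δSpec(A) (the subspace of non-isolated points of Spec(A)). -/
open Ordinal

/-- The socle of a commutative ring: the sum of all simple ideals. -/
def socleIdeal (A : Type*) [CommRing A] : Ideal A :=
  sSup {I : Ideal A | IsSimpleModule A I}

section Aux

variable {A : Type*} [CommRing A]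

/-- In a von Neumann regular ring every principal ideal is generated by an
idempotent. -/
lemma vnr_span_idem (hA : ∀ a : A, ∃ x, a * x * a = a) (a : A) :
    ∃ e : A, e * e = e ∧ Ideal.span {a} = Ideal.span {e} := by
  obtain ⟨x, hx⟩ := hA a
  refine ⟨a * x, ?_, le_antisymm ?_ ?_⟩
  · calc a * x * (a * x) = a * x * a * x := by ring
    _ = a * x := by rw [hx]
  · rw [Ideal.span_le, Set.singleton_subset_iff]
    exact Ideal.mem_span_singleton.mpr ⟨a, hx.symm⟩
  · rw [Ideal.span_le, Set.singleton_subset_iff]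
    exact Ideal.mem_span_singleton.mpr ⟨x, rfl⟩

lemma vnr_prime_isMaximal (hA : ∀ a : A, ∃ x, a * x * a = a)
    (P : Ideal A) [hP : P.IsPrime] : P.IsMaximal := by
  apply Ideal.Quotient.maximal_of_isField
  refine ⟨⟨0, 1, zero_ne_one⟩, mul_comm, ?_⟩
  intro a ha
  obtain ⟨r, rfl⟩ := Ideal.Quotient.mk_surjective a
  obtain ⟨x, hx⟩ := hA r
  refine ⟨Ideal.Quotient.mk P x, ?_⟩
  have h0 : (Ideal.Quotient.mk P r) *
      ((Ideal.Quotient.mk P r) * (Ideal.Quotient.mk P x) - 1) = 0 := by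
    have h := congrArg (Ideal.Quotient.mk P) hx
    simp only [map_mul] at h
    linear_combination h
  rcases mul_eq_zero.mp h0 with h | h
  · exact absurd h ha
  · rw [sub_eq_zero] at h
    exact h

/-- In a von Neumann regular ring, every nonzero element avoids some prime. -/
lemma vnr_exists_prime_not_mem (hA : ∀ a : A, ∃ x, a * x * a = a)
    {b : A} (hb : b ≠ 0) : ∃ Q : PrimeSpectrum A, b ∉ Q.asIdeal := by
  obtain ⟨f, hf, hspan⟩ := vnr_span_idem hA b
  have hfb : f ∣ b := Ideal.mem_span_singleton.mp
    (hspan ▸ Ideal.mem_span_singleton_self b)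
  have hbf : b ∣ f := Ideal.mem_span_singleton.mp
    (hspan ▸ Ideal.mem_span_singleton_self f)
  -- it suffices to find a prime avoiding f
  by_contra h
  push_neg at h
  have hfQ : ∀ Q : PrimeSpectrum A, f ∈ Q.asIdeal := by
    intro Q
    obtain ⟨c, hc⟩ := hbf
    rw [hc]
    exact Ideal.mul_mem_right _ _ (h Q)
  have hnil : f ∈ nilradical A := by
    rw [nilradical_eq_sInf, Submodule.mem_sInf]
    intro p hp
    exact hfQ ⟨p, hp⟩
  obtain ⟨n, hn⟩ := mem_nilradical.mp hnil
  have hpow : ∀ m : ℕ, f ^ (m + 1) = f := by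
    intro m
    induction m with
    | zero => simp
    | succ k ih => rw [pow_succ, ih, hf]
  have hf0 : f = 0 := by
    cases n with
    | zero =>
      have : (1 : A) = 0 := by simpa using hn
      calc f = f * 1 := (mul_one f).symm
      _ = 0 := by rw [this, mul_zero]
    | succ k => rw [hpow k] at hn; exact hn
  obtain ⟨c, hc⟩ := hfb
  exact hb (by rw [hc, hf0, zero_mul])

/-- From an atom not below `P`, the point `P` is a basic open set. -/
lemma vnr_atom_basicOpen (hA : ∀ a : A, ∃ x, a * x * a = a)
    (P : PrimeSpectrum A) {I : Ideal A} (hI : IsAtom I)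
    (hIP : ¬ I ≤ P.asIdeal) :
    ∃ e : A, (PrimeSpectrum.basicOpen e : Set (PrimeSpectrum A)) = {P} := by
  obtain ⟨b, hbI, hbP⟩ := SetLike.not_le_iff_exists.mp hIP
  have hb0 : b ≠ 0 := fun h => hbP (h ▸ P.asIdeal.zero_mem)
  have hspanI : Ideal.span {b} = I := by
    rcases (hI.le_iff).mp ((Ideal.span_le).mpr (Set.singleton_subset_iff.mpr hbI))
      with h | h
    · exact absurd (h ▸ Ideal.mem_span_singleton_self b) (by simp [hb0])
    · exact h
  obtain ⟨e, he, hspan⟩ := vnr_span_idem hA b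
  have heI : e ∈ I := hspanI ▸ hspan ▸ Ideal.mem_span_singleton_self e
  have heb : e ∣ b := Ideal.mem_span_singleton.mp
    (hspan ▸ Ideal.mem_span_singleton_self b)
  have heP : e ∉ P.asIdeal := by
    intro h
    obtain ⟨c, hc⟩ := heb
    exact hbP (hc ▸ P.asIdeal.mul_mem_right _ h)
  refine ⟨e, ?_⟩
  ext Q
  simp only [SetLike.mem_coe, PrimeSpectrum.mem_basicOpen, Set.mem_singleton_iff]
  constructor
  · intro heQ
    by_contra hQP
    -- Q ≠ P; since Q is maximal, Q is not contained in P
    have hQmax : Q.asIdeal.IsMaximal := vnr_prime_isMaximal hA Q.asIdeal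
    have hQle : ¬ Q.asIdeal ≤ P.asIdeal := by
      intro hle
      exact hQP (PrimeSpectrum.ext (hQmax.eq_of_le P.isPrime.ne_top hle))
    obtain ⟨t, htQ, htP⟩ := SetLike.not_le_iff_exists.mp hQle
    have hetI : e * t ∈ I := I.mul_mem_right t heI
    have hetP : e * t ∉ P.asIdeal := fun h =>
      (P.isPrime.mem_or_mem h).elim heP htP
    have het0 : e * t ≠ 0 := fun h => hetP (h ▸ P.asIdeal.zero_mem)
    have hspanet : Ideal.span {e * t} = I := by
      rcases (hI.le_iff).mp
        ((Ideal.span_le).mpr (Set.singleton_subset_iff.mpr hetI)) with h | h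
      · exact absurd (h ▸ Ideal.mem_span_singleton_self (e * t)) (by simp [het0])
      · exact h
    have : e ∈ Ideal.span {e * t} := hspanet.symm ▸ heI
    obtain ⟨c, hc⟩ := Ideal.mem_span_singleton.mp this
    exact heQ (hc ▸ Q.asIdeal.mul_mem_right _ (Q.asIdeal.mul_mem_left _ htQ))
  · rintro rfl
    exact heP

/-- If `{P}` is open, there is an idempotent `e ∉ P` generating an atom. -/
lemma vnr_of_isOpen (hA : ∀ a : A, ∃ x, a * x * a = a)
    (P : PrimeSpectrum A) (h : IsOpen ({P} : Set (PrimeSpectrum A))) :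
    ∃ e : A, e ∉ P.asIdeal ∧ IsAtom (Ideal.span {e} : Ideal A) := by
  obtain ⟨U, ⟨a, ha⟩, hPU, hUsub⟩ :=
    (PrimeSpectrum.isTopologicalBasis_basic_opens (R := A)).isOpen_iff.mp h P rfl
  subst ha
  obtain ⟨e, he, hspan⟩ := vnr_span_idem hA a
  have hea : e ∣ a := Ideal.mem_span_singleton.mp
    (hspan ▸ Ideal.mem_span_singleton_self a)
  have hae : a ∣ e := Ideal.mem_span_singleton.mp
    (hspan.symm ▸ Ideal.mem_span_singleton_self e)
  have hbo : (PrimeSpectrum.basicOpen e : Set (PrimeSpectrum A)) = {P} := by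
    apply le_antisymm
    · intro Q hQ
      apply hUsub
      simp only [SetLike.mem_coe, PrimeSpectrum.mem_basicOpen] at hQ ⊢
      intro haQ
      obtain ⟨c, hc⟩ := hae
      exact hQ (by rw [hc]; exact Ideal.mul_mem_right _ _ haQ)
    · intro Q hQ
      rw [Set.mem_singleton_iff] at hQ
      subst hQ
      simp only [SetLike.mem_coe, PrimeSpectrum.mem_basicOpen] at hPU ⊢
      intro heQ
      obtain ⟨c, hc⟩ := hea
      exact hPU (by rw [hc]; exact Ideal.mul_mem_right _ _ heQ)
  have heP : e ∉ P.asIdeal := by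
    have : P ∈ (PrimeSpectrum.basicOpen e : Set (PrimeSpectrum A)) := by
      rw [hbo]; rfl
    simpa using this
  have he0 : e ≠ 0 := fun h => heP (h ▸ P.asIdeal.zero_mem)
  refine ⟨e, heP, ?_, ?_⟩
  · exact fun h => he0 (Ideal.span_singleton_eq_bot.mp h)
  · intro J hJ
    rw [Submodule.eq_bot_iff]
    intro b hbJ
    by_contra hb0
    have hbe : b ∈ Ideal.span {e} := hJ.le hbJ
    obtain ⟨c, hc⟩ := Ideal.mem_span_singleton.mp hbe
    obtain ⟨f, hf, hspanb⟩ := vnr_span_idem hA b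
    have hfb : f ∣ b := Ideal.mem_span_singleton.mp
      (hspanb ▸ Ideal.mem_span_singleton_self b)
    have hbf : b ∣ f := Ideal.mem_span_singleton.mp
      (hspanb.symm ▸ Ideal.mem_span_singleton_self f)
    obtain ⟨Q, hQ⟩ := vnr_exists_prime_not_mem hA hb0
    have heQ : e ∉ Q.asIdeal := fun h => hQ (hc ▸ Q.asIdeal.mul_mem_right _ h)
    have hQP : Q = P := by
      have : Q ∈ (PrimeSpectrum.basicOpen e : Set (PrimeSpectrum A)) := by
        simpa using heQ
      rwa [hbo, Set.mem_singleton_iff] at this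
    have hbP : b ∉ P.asIdeal := hQP ▸ hQ
    have hfP : f ∉ P.asIdeal := fun h => by
      obtain ⟨c', hc'⟩ := hfb
      exact hbP (hc' ▸ P.asIdeal.mul_mem_right _ h)
    -- claim e * (1 - f) = 0
    have hef : e * (1 - f) = 0 := by
      by_contra hg
      obtain ⟨R, hR⟩ := vnr_exists_prime_not_mem hA hg
      have heR : e ∉ R.asIdeal := fun h => hR (R.asIdeal.mul_mem_right _ h)
      have h1fR : (1 - f) ∉ R.asIdeal := fun h => hR (R.asIdeal.mul_mem_left _ h)
      have hRP : R = P := by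
        have : R ∈ (PrimeSpectrum.basicOpen e : Set (PrimeSpectrum A)) := by
          simpa using heR
        rwa [hbo, Set.mem_singleton_iff] at this
      have : f * (1 - f) ∈ P.asIdeal := by
        have h0 : f * (1 - f) = 0 := by linear_combination -hf
        rw [h0]; exact P.asIdeal.zero_mem
      rcases P.isPrime.mem_or_mem this with h | h
      · exact hfP h
      · exact h1fR (hRP ▸ h)
    have hef' : e = e * f := by linear_combination hef
    -- so e ∈ span {b} ≤ J, contradicting J < span {e}
    have heJ : e ∈ J := by
      have hespanb : e ∈ Ideal.span {b} := by
        rw [hspanb]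
        exact Ideal.mem_span_singleton.mpr ⟨e, by linear_combination hef⟩
      have : Ideal.span {b} ≤ J := (Ideal.span_le).mpr
        (Set.singleton_subset_iff.mpr hbJ)
      exact this hespanb
    have : Ideal.span {e} ≤ J := (Ideal.span_le).mpr
      (Set.singleton_subset_iff.mpr heJ)
    exact absurd (le_antisymm hJ.le this) (ne_of_lt hJ)

end Aux

/-- The socle of a commutative von Neumann regular ring is contained in a
prime `P` iff `P` is not isolated; hence `Spec (A/sA)` is homeomorphic to
the Cantor–Bendixson derivative of `Spec A`. -/
theorem stmt6 (A : Type*) [CommRing A] (hA : ∀ a : A, ∃ x, a * x * a = a) :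
    (∀ P : PrimeSpectrum A,
      socleIdeal A ≤ P.asIdeal ↔ ¬ IsOpen ({P} : Set (PrimeSpectrum A))) ∧
    Nonempty (PrimeSpectrum (A ⧸ socleIdeal A) ≃ₜ
      {P : PrimeSpectrum A // ¬ IsOpen ({P} : Set (PrimeSpectrum A))}) := by
  have part1 : ∀ P : PrimeSpectrum A,
      socleIdeal A ≤ P.asIdeal ↔ ¬ IsOpen ({P} : Set (PrimeSpectrum A)) := by
    intro P
    constructor
    · intro hle hopen
      obtain ⟨e, heP, hatom⟩ := vnr_of_isOpen hA P hopen
      have hmem : Ideal.span {e} ∈ {I : Ideal A | IsSimpleModule A I} :=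
        isSimpleModule_iff_isAtom.mpr hatom
      exact heP (hle (le_sSup hmem (Ideal.mem_span_singleton_self e)))
    · intro hopen
      by_contra hle
      rw [socleIdeal, sSup_le_iff] at hle
      push_neg at hle
      obtain ⟨I, hIsimple, hIP⟩ := hle
      have hatom : IsAtom I := isSimpleModule_iff_isAtom.mp hIsimple
      obtain ⟨e, hbo⟩ := vnr_atom_basicOpen hA P hatom hIP
      exact hopen (hbo ▸ (PrimeSpectrum.basicOpen e).isOpen)
  refine ⟨part1, ?_⟩
  have hs : Function.Surjective (Ideal.Quotient.mk (socleIdeal A)) :=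
    Ideal.Quotient.mk_surjective
  have hemb := PrimeSpectrum.isClosedEmbedding_comap_of_surjective _ _ hs
  have hr : Set.range (PrimeSpectrum.comap (Ideal.Quotient.mk (socleIdeal A)))
      = {P : PrimeSpectrum A | ¬ IsOpen ({P} : Set (PrimeSpectrum A))} := by
    rw [range_comap_of_surjective _ _ hs, Ideal.mk_ker]
    ext P
    rw [PrimeSpectrum.mem_zeroLocus, Set.mem_setOf_eq, ← part1 P]
    exact SetLike.coe_subset_coe
  exact ⟨hemb.toIsEmbedding.toHomeomorph.trans
    (Homeomorph.setCongr hr)⟩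
end

section
/- Let R be a commutative von Neumann regular ring that is not semi-artinian, and let σ be the least ordinal with s_σ R = s_{σ+1} R (the Loewy series stabilizes). Then the quotient ring R/s_σ R is a nonzero commutative von Neumann regular ring with zero socle, and Spec(R/s_σ R) is homeomorphic to δ^σ Spec(R), which is the maximal perfect subspace of Spec(R). -/
open Ordinal

/-- The Loewy series of a commutative ring: `loewy A 0 = ⊥`,
`loewy A (α+1)` is the preimage of the socle of `A ⧸ loewy A α`, and
unions are taken at limit ordinals. -/
noncomputable def loewy (A : Type*) [CommRing A] : Ordinal.{0} → Ideal A :=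
  fun o => Ordinal.limitRecOn o ⊥
    (fun _ s => Ideal.comap (Ideal.Quotient.mk s) (socleIdeal (A ⧸ s)))
    (fun o _ ih => ⨆ (b : Ordinal) (h : b < o), ih b h)

/-- A ring is semi-artinian if its Loewy series reaches the whole ring. -/
def IsSemiArtinian (A : Type*) [CommRing A] : Prop :=
  ∃ α : Ordinal.{0}, loewy A α = ⊤

/-- The Cantor–Bendixson derivative of a subset: the set of its
non-isolated points in the subspace topology. -/
def derivSet {X : Type*} [TopologicalSpace X] (s : Set X) : Set X :=
  {x ∈ s | ∀ U : Set X, IsOpen U → x ∈ U → ¬ (U ∩ s ⊆ {x})}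

/-- Iterated Cantor–Bendixson derivatives of a topological space. -/
noncomputable def cbDeriv (X : Type*) [TopologicalSpace X] : Ordinal.{0} → Set X :=
  fun o => Ordinal.limitRecOn o Set.univ
    (fun _ s => derivSet s)
    (fun o _ ih => ⋂ (b : Ordinal) (h : b < o), ih b h)

/- ### basic unfolding lemmas -/

lemma loewy_zero (A : Type*) [CommRing A] : loewy A 0 = ⊥ := by
  simp [loewy]

lemma loewy_succ (A : Type*) [CommRing A] (o : Ordinal.{0}) :
    loewy A (o + 1) =
      Ideal.comap (Ideal.Quotient.mk (loewy A o)) (socleIdeal (A ⧸ loewy A o)) := by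
  rw [loewy, add_one_eq_succ, Ordinal.limitRecOn_succ]; rfl

lemma loewy_limit (A : Type*) [CommRing A] {o : Ordinal.{0}} (ho : Order.IsSuccLimit o) :
    loewy A o = ⨆ (b : Ordinal) (_ : b < o), loewy A b := by
  rw [loewy, Ordinal.limitRecOn_limit _ _ _ _ ho]; rfl

lemma cbDeriv_zero (X : Type*) [TopologicalSpace X] : cbDeriv X 0 = Set.univ := by
  simp [cbDeriv]

lemma cbDeriv_succ (X : Type*) [TopologicalSpace X] (o : Ordinal.{0}) :
    cbDeriv X (o + 1) = derivSet (cbDeriv X o) := by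
  rw [cbDeriv, add_one_eq_succ, Ordinal.limitRecOn_succ]; rfl

lemma cbDeriv_limit (X : Type*) [TopologicalSpace X] {o : Ordinal.{0}} (ho : Order.IsSuccLimit o) :
    cbDeriv X o = ⋂ (b : Ordinal) (_ : b < o), cbDeriv X b := by
  rw [cbDeriv, Ordinal.limitRecOn_limit _ _ _ _ ho]; rfl

/- ### von Neumann regular generalities -/

section VNR
variable {A : Type*} [CommRing A]

lemma vnr_quot (hA : ∀ a : A, ∃ x, a * x * a = a) (I : Ideal A) :
    ∀ a : A ⧸ I, ∃ x, a * x * a = a := by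
  intro a
  obtain ⟨r, rfl⟩ := Ideal.Quotient.mk_surjective a
  obtain ⟨x, hx⟩ := hA r
  exact ⟨Ideal.Quotient.mk I x, by rw [← map_mul, ← map_mul, hx]⟩

lemma vnr_eq_zero_of_nilpotent (hA : ∀ a : A, ∃ x, a * x * a = a) {a : A}
    (h : IsNilpotent a) : a = 0 := by
  obtain ⟨x, hx⟩ := hA a
  have key : ∀ k : ℕ, a = a * (a * x) ^ k := by
    intro k
    induction k with
    | zero => simp
    | succ k ih =>
      have h1 : (a * x * a) * (a * x) ^ k = a * (a * x) ^ (k + 1) := by ring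
      rw [hx] at h1
      rw [← h1]; exact ih
  obtain ⟨n, hn⟩ := h
  have := key n
  rw [mul_pow] at this
  calc a = a * (a ^ n * x ^ n) := this
    _ = 0 := by rw [hn]; ring

lemma exists_prime_not_mem (hA : ∀ a : A, ∃ x, a * x * a = a) {a : A} (ha : a ≠ 0) :
    ∃ p : PrimeSpectrum A, a ∉ p.asIdeal := by
  by_contra h
  push_neg at h
  apply ha
  apply vnr_eq_zero_of_nilpotent hA
  rw [← mem_nilradical, nilradical_eq_sInf]
  exact Submodule.mem_sInf.mpr fun I hI => h ⟨I, hI⟩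

end VNR

/- ### simple submodule transfer -/

section Simple
variable {A : Type*} [CommRing A]

lemma simple_sub {I : Ideal A} (hI : IsSimpleModule A I) {J : Ideal A} (h : J ≤ I) :
    J = ⊥ ∨ J = I := by
  have := hI.toIsSimpleOrder.2 (Submodule.comap I.subtype J)
  rcases this with h1 | h1
  · left
    have := congrArg (Submodule.map I.subtype) h1
    rwa [Submodule.map_comap_subtype, inf_eq_right.mpr h, Submodule.map_bot] at this
  · right
    have := congrArg (Submodule.map I.subtype) h1
    rwa [Submodule.map_comap_subtype, inf_eq_right.mpr h, Submodule.map_subtype_top] at this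

lemma simple_of {I : Ideal A} (hne : I ≠ ⊥)
    (h : ∀ J : Ideal A, J ≤ I → J = ⊥ ∨ J = I) : IsSimpleModule A I := by
  have hinj : Function.Injective (Submodule.map I.subtype :
      Submodule A I → Submodule A A) :=
    Submodule.map_injective_of_injective I.injective_subtype
  have : Nontrivial (Submodule A I) := by
    refine ⟨⊥, ⊤, fun hbt => hne ?_⟩
    have := congrArg (Submodule.map I.subtype) hbt
    rwa [Submodule.map_bot, Submodule.map_subtype_top, eq_comm] at this
  refine { toIsSimpleOrder := ⟨fun J' => ?_⟩ }
  have hle : Submodule.map I.subtype J' ≤ I := Submodule.map_subtype_le I J'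
  rcases h _ hle with h1 | h1
  · left; apply hinj; rwa [Submodule.map_bot]
  · right; apply hinj; rwa [Submodule.map_subtype_top]

end Simple

/- ### isolated points of Spec of a VNR ring -/

section Spec
variable {A : Type*} [CommRing A]

open PrimeSpectrum

/-- From `a*x*a = a` produce an opaque idempotent `e = a*x`. -/
lemma exists_idem' {a x : A} (hx : a * x * a = a) :
    ∃ e : A, e * e = e ∧ e * a = a ∧ e = a * x := by
  refine ⟨a * x, ?_, ?_, rfl⟩
  · have h1 : a * x * (a * x) = a * x * a * x := by ring
    rw [hx] at h1; exact h1
  · exact hx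

lemma isolated_of_simple (hA : ∀ a : A, ∃ x, a * x * a = a) {I : Ideal A}
    (hI : IsSimpleModule A I) {p : PrimeSpectrum A} (hp : ¬ I ≤ p.asIdeal) :
    ∃ U : Set (PrimeSpectrum A), IsOpen U ∧ p ∈ U ∧ U ⊆ {p} := by
  obtain ⟨a, haI, hap⟩ := SetLike.not_le_iff_exists.mp hp
  obtain ⟨x, hx⟩ := hA a
  obtain ⟨e, hee, hea, he_def⟩ := exists_idem' hx
  have heI : e ∈ I := he_def ▸ I.mul_mem_right x haI
  have hep : e ∉ p.asIdeal := fun h => hap (by rw [← hea]; exact p.asIdeal.mul_mem_right a h)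
  -- key: any prime not containing e consists exactly of elements killed by e
  have key : ∀ q : PrimeSpectrum A, e ∉ q.asIdeal → ∀ y : A, y ∈ q.asIdeal ↔ e * y = 0 := by
    intro q heq y
    constructor
    · intro hy
      have hmem : e * y ∈ I := I.mul_mem_right y heI
      have hle : Ideal.span {e * y} ≤ I := by
        rw [Ideal.span_le]; simpa using hmem
      rcases simple_sub hI hle with h1 | h1
      · have : e * y ∈ Ideal.span {e * y} := Ideal.subset_span rfl
        rw [h1] at this; simpa using this
      · exfalso
        apply heq
        have heI' : e ∈ Ideal.span {e * y} := h1 ▸ heI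
        have hsub : Ideal.span {e * y} ≤ q.asIdeal := by
          rw [Ideal.span_le]
          simpa using q.asIdeal.mul_mem_left e hy
        exact hsub heI'
    · intro h0
      have : e * y ∈ q.asIdeal := by rw [h0]; exact q.asIdeal.zero_mem
      rcases q.isPrime.mem_or_mem this with h | h
      · exact absurd h heq
      · exact h
  refine ⟨basicOpen e, (basicOpen e).isOpen, hep, ?_⟩
  intro q hq
  have hq' : e ∉ q.asIdeal := hq
  have : q = p := by
    ext y
    rw [key q hq' y, key p hep y]
  simpa using this

lemma simple_of_isolated (hA : ∀ a : A, ∃ x, a * x * a = a) {p : PrimeSpectrum A}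
    (h : ∃ U : Set (PrimeSpectrum A), IsOpen U ∧ p ∈ U ∧ U ⊆ {p}) :
    ∃ I : Ideal A, IsSimpleModule A I ∧ ¬ I ≤ p.asIdeal := by
  obtain ⟨U, hUo, hpU, hU1⟩ := h
  obtain ⟨-, ⟨f, rfl⟩, hpf, hfU⟩ :=
    isTopologicalBasis_basic_opens.exists_subset_of_mem_open hpU hUo
  obtain ⟨x, hx⟩ := hA f
  obtain ⟨e, hee, hef, he_def⟩ := exists_idem' hx
  have hfp : f ∉ p.asIdeal := hpf
  have hep : e ∉ p.asIdeal := fun h => hfp (by rw [← hef]; exact p.asIdeal.mul_mem_right f h)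
  -- any prime not containing e equals p
  have key : ∀ q : PrimeSpectrum A, e ∉ q.asIdeal → q = p := by
    intro q heq
    have hfq : f ∉ q.asIdeal := fun h => heq (he_def ▸ q.asIdeal.mul_mem_right x h)
    have : q ∈ (basicOpen f : Set (PrimeSpectrum A)) := hfq
    have := hU1 (hfU this)
    simpa using this
  refine ⟨Ideal.span {e}, ?_, ?_⟩
  · apply simple_of
    · intro hbot
      apply hep
      have : e ∈ Ideal.span {e} := Ideal.subset_span rfl
      rw [hbot] at this
      simp only [Ideal.mem_bot] at this
      rw [this]; exact p.asIdeal.zero_mem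
    · intro J hJle
      by_cases hJ : J = ⊥
      · exact Or.inl hJ
      right
      obtain ⟨a, haJ, ha0⟩ := Submodule.exists_mem_ne_zero_of_ne_bot hJ
      -- a ∉ p
      obtain ⟨c, hc⟩ := Ideal.mem_span_singleton'.mp (hJle haJ)
      obtain ⟨q, hq⟩ := exists_prime_not_mem hA ha0
      have heq : e ∉ q.asIdeal := fun h => hq (by rw [← hc]; exact q.asIdeal.mul_mem_left c h)
      have hap : a ∉ p.asIdeal := key q heq ▸ hq
      -- idempotent g := a * x' lies in J
      obtain ⟨x', hx'⟩ := hA a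
      obtain ⟨g, hgg, hga, hg_def⟩ := exists_idem' hx'
      have hgJ : g ∈ J := hg_def ▸ J.mul_mem_right x' haJ
      have hg0 : g ≠ 0 := fun h => ha0 (by rw [← hga, h, zero_mul])
      -- g = g * e
      obtain ⟨c', hc'⟩ := Ideal.mem_span_singleton'.mp (hJle hgJ)
      have hge : g * e = g := by
        calc g * e = c' * e * e := by rw [hc']
          _ = c' * (e * e) := by ring
          _ = c' * e := by rw [hee]
          _ = g := hc'
      have hhh : (e - g) * (e - g) = e - g := by
        have h1 : (e - g) * (e - g) = e * e - 2 * (g * e) + g * g := by ring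
        rw [hee, hge, hgg] at h1
        rw [h1]; ring
      have hhzero : e - g = 0 := by
        by_contra hne0
        obtain ⟨q', hq'⟩ := exists_prime_not_mem hA hne0
        have heq' : e ∉ q'.asIdeal := by
          intro h
          apply hq'
          have hg' : g ∈ q'.asIdeal := by rw [← hge]; exact q'.asIdeal.mul_mem_left g h
          exact q'.asIdeal.sub_mem h hg'
        have hhp : e - g ∉ p.asIdeal := key q' heq' ▸ hq'
        obtain ⟨q'', hq''⟩ := exists_prime_not_mem hA hg0
        have heq'' : e ∉ q''.asIdeal := fun h =>
          hq'' (by rw [← hge]; exact q''.asIdeal.mul_mem_left g h)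
        have hgp : g ∉ p.asIdeal := key q'' heq'' ▸ hq''
        have hprod : g * (e - g) = 0 := by
          calc g * (e - g) = g * e - g * g := by ring
            _ = g - g := by rw [hge, hgg]
            _ = 0 := sub_self g
        have : g * (e - g) ∈ p.asIdeal := by rw [hprod]; exact p.asIdeal.zero_mem
        rcases p.isPrime.mem_or_mem this with h | h
        · exact hgp h
        · exact hhp h
      have heg : e = g := by rwa [sub_eq_zero] at hhzero
      apply le_antisymm hJle
      rw [Ideal.span_le]
      intro y hy
      simp only [Set.mem_singleton_iff] at hy
      rw [hy, heg]; exact hgJ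
  · intro hle
    exact hep (hle (Ideal.subset_span rfl))

lemma derivSet_univ_eq (hA : ∀ a : A, ∃ x, a * x * a = a) :
    derivSet (Set.univ : Set (PrimeSpectrum A)) = zeroLocus (socleIdeal A : Set A) := by
  ext p
  simp only [derivSet, Set.mem_setOf_eq, Set.mem_univ, true_and, Set.inter_univ,
    mem_zeroLocus]
  constructor
  · intro h
    intro y hy
    by_contra hyp
    have hsoc : ¬ (socleIdeal A : Ideal A) ≤ p.asIdeal := fun hle => hyp (hle hy)
    have : ∃ I ∈ {I : Ideal A | IsSimpleModule A I}, ¬ I ≤ p.asIdeal := by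
      by_contra hall
      push_neg at hall
      exact hsoc (sSup_le_iff.mpr hall)
    obtain ⟨I, hIsimple, hIp⟩ := this
    obtain ⟨U, hUo, hpU, hU1⟩ := isolated_of_simple hA hIsimple hIp
    exact h U hUo hpU hU1
  · intro h U hUo hpU hU1
    obtain ⟨I, hIsimple, hIp⟩ := simple_of_isolated hA ⟨U, hUo, hpU, hU1⟩
    apply hIp
    calc I ≤ socleIdeal A := le_sSup hIsimple
      _ ≤ p.asIdeal := SetLike.coe_subset_coe.mp h

end Spec

/- ### derivSet under embeddings -/

lemma image_derivSet_univ {X Y : Type*} [TopologicalSpace X] [TopologicalSpace Y]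
    {e : X → Y} (he : Topology.IsEmbedding e) :
    e '' derivSet (Set.univ : Set X) = derivSet (Set.range e) := by
  ext y
  constructor
  · rintro ⟨a, ⟨-, ha⟩, rfl⟩
    refine ⟨⟨a, rfl⟩, fun U hUo hyU hsub =>
      ha (e ⁻¹' U) (hUo.preimage he.continuous) hyU ?_⟩
    intro b hb
    have hmem : e b ∈ U ∩ Set.range e := ⟨hb.1, ⟨b, rfl⟩⟩
    have := hsub hmem
    simp only [Set.mem_singleton_iff] at this ⊢
    exact he.injective this
  · rintro ⟨⟨a, rfl⟩, hy⟩
    refine ⟨a, ⟨Set.mem_univ a, ?_⟩, rfl⟩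
    intro V hVo haV hsub
    obtain ⟨U, hUo, hUV⟩ := he.isOpen_iff.mp hVo
    have haU : e a ∈ U := by rw [← hUV] at haV; exact haV
    apply hy U hUo haU
    rintro z ⟨hzU, b, rfl⟩
    have hbV : b ∈ V := by rw [← hUV]; exact hzU
    have := hsub ⟨hbV, Set.mem_univ b⟩
    simp only [Set.mem_singleton_iff] at this ⊢
    rw [this]

/- ### the main transfinite computation -/

lemma cb_eq (R : Type*) [CommRing R] (hR : ∀ a : R, ∃ x, a * x * a = a)
    (α : Ordinal.{0}) :
    cbDeriv (PrimeSpectrum R) α = PrimeSpectrum.zeroLocus (loewy R α : Set R) := by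
  induction α using Ordinal.limitRecOn with
  | zero =>
    rw [cbDeriv_zero, loewy_zero, PrimeSpectrum.zeroLocus_bot]
  | add_one o ih =>
    rw [cbDeriv_succ, loewy_succ, ih]
    have hsurj : Function.Surjective (Ideal.Quotient.mk (loewy R o)) :=
      Ideal.Quotient.mk_surjective
    have hemb := PrimeSpectrum.isClosedEmbedding_comap_of_surjective _ _ hsurj
    have hrange : Set.range (PrimeSpectrum.comap (Ideal.Quotient.mk (loewy R o))) =
        PrimeSpectrum.zeroLocus (loewy R o : Set R) := by
      rw [range_comap_of_surjective _ _ hsurj, Ideal.mk_ker]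
    rw [← hrange, ← image_derivSet_univ hemb.toIsEmbedding,
      derivSet_univ_eq (vnr_quot hR (loewy R o)),
      image_comap_zeroLocus_eq_zeroLocus_comap _ _ hsurj]
  | limit o ho ih =>
    rw [cbDeriv_limit _ ho, loewy_limit _ ho]
    rw [PrimeSpectrum.zeroLocus_iSup]
    refine Set.iInter_congr fun b => ?_
    rw [PrimeSpectrum.zeroLocus_iSup]
    exact Set.iInter_congr fun hb => ih b hb

/- ### perfect sets are contained in every derivative -/

lemma derivSet_mono {X : Type*} [TopologicalSpace X] {s t : Set X} (h : s ⊆ t) :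
    derivSet s ⊆ derivSet t := by
  rintro x ⟨hxs, hx⟩
  refine ⟨h hxs, fun U hUo hxU hsub => hx U hUo hxU fun z hz => hsub ⟨hz.1, h hz.2⟩⟩

lemma perfect_subset_cbDeriv {X : Type*} [TopologicalSpace X] {t : Set X}
    (ht : derivSet t = t) (α : Ordinal.{0}) : t ⊆ cbDeriv X α := by
  induction α using Ordinal.limitRecOn with
  | zero => rw [cbDeriv_zero]; exact Set.subset_univ t
  | add_one o ih =>
    rw [cbDeriv_succ, ← ht]
    exact derivSet_mono ih
  | limit o ho ih =>
    rw [cbDeriv_limit _ ho]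
    exact Set.subset_iInter fun b => Set.subset_iInter fun hb => ih b hb

/-- For a non-semi-artinian commutative von Neumann regular ring `R` with
Loewy series stabilizing first at `σ`, the quotient `R ⧸ s_σ R` is a nonzero
von Neumann regular ring with zero socle, and its spectrum is homeomorphic
to `δ^σ Spec R`, the maximal perfect subspace of `Spec R`. -/
theorem stmt18 (R : Type*) [CommRing R] (hR : ∀ a : R, ∃ x, a * x * a = a)
    (hns : ¬ IsSemiArtinian R) (σ : Ordinal.{0})
    (hστ : loewy R σ = loewy R (σ + 1))
    (hmin : ∀ β < σ, loewy R β ≠ loewy R (β + 1)) :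
    Nontrivial (R ⧸ loewy R σ) ∧
    (∀ a : R ⧸ loewy R σ, ∃ x, a * x * a = a) ∧
    socleIdeal (R ⧸ loewy R σ) = ⊥ ∧
    Nonempty (PrimeSpectrum (R ⧸ loewy R σ) ≃ₜ
      (cbDeriv (PrimeSpectrum R) σ)) ∧
    derivSet (cbDeriv (PrimeSpectrum R) σ) = cbDeriv (PrimeSpectrum R) σ ∧
    ∀ t : Set (PrimeSpectrum R), derivSet t = t →
      t ⊆ cbDeriv (PrimeSpectrum R) σ := by
  have hne : loewy R σ ≠ ⊤ := fun h => hns ⟨σ, h⟩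
  have hnontriv : Nontrivial (R ⧸ loewy R σ) := Ideal.Quotient.nontrivial_iff.mpr hne
  have hvnr := vnr_quot hR (loewy R σ)
  have hsurj : Function.Surjective (Ideal.Quotient.mk (loewy R σ)) :=
    Ideal.Quotient.mk_surjective
  have hsoc : socleIdeal (R ⧸ loewy R σ) = ⊥ := by
    apply Ideal.comap_injective_of_surjective (Ideal.Quotient.mk (loewy R σ)) hsurj
    rw [← loewy_succ, ← hστ, ← RingHom.ker_eq_comap_bot, Ideal.mk_ker]
  have hcb := cb_eq R hR
  refine ⟨hnontriv, hvnr, hsoc, ?_, ?_, fun t ht => perfect_subset_cbDeriv ht σ⟩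
  · have hemb := PrimeSpectrum.isClosedEmbedding_comap_of_surjective _ _ hsurj
    refine ⟨(hemb.toIsEmbedding.toHomeomorph).trans (Homeomorph.setCongr ?_)⟩
    rw [range_comap_of_surjective _ _ hsurj, Ideal.mk_ker, hcb σ]
  · rw [show derivSet (cbDeriv (PrimeSpectrum R) σ) = cbDeriv (PrimeSpectrum R) (σ + 1) from
      (cbDeriv_succ _ σ).symm, hcb, hcb, ← hστ]
end
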